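/- Let A be a finite nonempty set of exponents in ℤ^d and let a : A → ℂ with a_m ≠ 0 for every m ∈ A. Suppose x ∈ ℝ^d satisfies ⟨m, x⟩ + log|a_m| ≤ −log(|A| + 1) for every m ∈ A, where |A| is the cardinality of A. Then for every z ∈ (ℂ \ {0})^d with log|z_i| = x_i for all i, one has ∑_{m ∈ A} a_m z^m ≠ 1. (In the paper's notation: the amoeba of the hypersurface ∑_{m ∈ Δ_ℤ \ {0}} a_m z^m = 1 is disjoint from the polytope Δ^∨_{λ−c} with λ = log|a| and c = log|Δ_ℤ|.) -/

import Mathlib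

/-- The amoeba of the hypersurface `∑_{m ∈ Δ_ℤ \ {0}} a_m z^m = 1` is disjoint from the
polytope `Δ^∨_{λ−c}` with `λ = log|a|` and `c = log|Δ_ℤ|`: if
`⟨m, x⟩ + log|a_m| ≤ −log(|A| + 1)` for all exponents `m`, then no `z` with `log|z| = x`
satisfies the equation. -/
theorem stmt_0 (d : ℕ) (A : Finset (Fin d → ℤ)) (hA : A.Nonempty)
    (a : (Fin d → ℤ) → ℂ) (ha : ∀ m ∈ A, a m ≠ 0)
    (x : Fin d → ℝ)
    (hx : ∀ m ∈ A, (∑ i, (m i : ℝ) * x i) + Real.log ‖a m‖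
      ≤ - Real.log ((A.card : ℝ) + 1))
    (z : Fin d → ℂ) (hz : ∀ i, z i ≠ 0)
    (hzx : ∀ i, Real.log ‖z i‖ = x i) :
    ∑ m ∈ A, a m * ∏ i, z i ^ m i ≠ 1 := by
  intro h
  have hcard : (0:ℝ) < (A.card : ℝ) + 1 := by positivity
  have key : ∀ m ∈ A, ‖a m * ∏ i, z i ^ m i‖ ≤ 1 / ((A.card:ℝ)+1) := by
    intro m hm
    have hzpos : ∀ i, 0 < ‖z i‖ := fun i =>
      norm_pos_iff.mpr (hz i)
    have habs : ‖a m * ∏ i, z i ^ m i‖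
        = ‖a m‖ * ∏ i, ‖z i‖ ^ m i := by
      rw [norm_mul, norm_prod]
      simp [norm_zpow]
    have hpos : 0 < ‖a m‖ * ∏ i, ‖z i‖ ^ m i := by
      apply mul_pos (norm_pos_iff.mpr (ha m hm))
      exact Finset.prod_pos fun i _ => zpow_pos (hzpos i) _
    have hlog : Real.log (‖a m‖ * ∏ i, ‖z i‖ ^ m i)
        = Real.log (‖a m‖) + ∑ i, (m i : ℝ) * x i := by
      rw [Real.log_mul (ne_of_gt (norm_pos_iff.mpr (ha m hm)))
        (ne_of_gt (Finset.prod_pos fun i _ => zpow_pos (hzpos i) _)),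
        Real.log_prod fun i _ => ne_of_gt (zpow_pos (hzpos i) _)]
      congr 1
      refine Finset.sum_congr rfl fun i _ => ?_
      rw [Real.log_zpow, hzx i]
    have hle : Real.log (‖a m‖ * ∏ i, ‖z i‖ ^ m i)
        ≤ Real.log (1 / ((A.card:ℝ)+1)) := by
      rw [hlog, Real.log_div one_ne_zero (ne_of_gt hcard), Real.log_one]
      linarith [hx m hm]
    rw [habs]
    have := (Real.log_le_log_iff hpos (by positivity)).mp hle
    exact this
  have hsum : ‖∑ m ∈ A, a m * ∏ i, z i ^ m i‖
      ≤ (A.card : ℝ) * (1 / ((A.card:ℝ)+1)) := by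
    calc ‖∑ m ∈ A, a m * ∏ i, z i ^ m i‖
        ≤ ∑ m ∈ A, ‖a m * ∏ i, z i ^ m i‖ :=
          norm_sum_le _ _
      _ ≤ ∑ _m ∈ A, 1 / ((A.card:ℝ)+1) := Finset.sum_le_sum key
      _ = (A.card : ℝ) * (1 / ((A.card:ℝ)+1)) := by
          rw [Finset.sum_const, nsmul_eq_mul]
  rw [h] at hsum
  simp only [norm_one] at hsum
  have : (A.card : ℝ) * (1 / ((A.card:ℝ)+1)) < 1 := by
    rw [mul_one_div, div_lt_one hcard]
    linarith
  linarith
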